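/- Fix δ > 0 and λ ∈ (0,1) with λ/(1−λ) > δ. The function y ↦ log(1/y + (λ/(δ(1−λ)) − 1)·(1−y)/y) / log(1/y) is increasing in y on (0,1), tends to (1/δ)·log(1 + (λ/((1−λ)δ))·(e^δ − 1)) as y → e^{−δ}, and tends to λ/((1−λ)δ) as y → 1⁻. -/

import Mathlib

open Real Set Filter Topology

private lemma xlog_lb (t : ℝ) (ht : 0 < t) : t - 1 ≤ t * Real.log t := by
  have h := Real.log_le_sub_one_of_pos (inv_pos.mpr ht)
  rw [Real.log_inv] at h
  have h2 := mul_le_mul_of_nonneg_left h ht.le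
  have h3 : t * t⁻¹ = 1 := mul_inv_cancel₀ ht.ne'
  nlinarith

private lemma aux_alg (a b l c : ℝ) (hc : c ≠ 0) (hb : b ≠ 0) (hl : l ≠ 0) :
    a / (-l) + 1 = a / (c * b) * (c * (-b / l)) + 1 := by
  rw [div_neg]
  field_simp

private lemma slope_log : Tendsto (fun y => Real.log y / (y - 1)) (𝓝[≠] (1:ℝ)) (𝓝 1) := by
  have h := Real.hasDerivAt_log one_ne_zero
  rw [hasDerivAt_iff_tendsto_slope] at h
  have he : (slope Real.log 1) = fun y => Real.log y / (y - 1) := by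
    funext y; simp [slope_def_field]
  rw [he] at h; simpa using h

/-- For `δ > 0` and `λ ∈ (0,1)` with `λ/(1−λ) > δ`, the map
`y ↦ log(1/y + (λ/(δ(1−λ)) − 1)(1−y)/y)/log(1/y)` is increasing on `(0,1)`,
tends to `(1/δ)log(1 + (λ/((1−λ)δ))(e^δ − 1))` as `y → e^{−δ}` and tends to
`λ/((1−λ)δ)` as `y → 1⁻`. -/
theorem stmt_6 (δ lam : ℝ) (hδ : 0 < δ) (hlam : lam ∈ Set.Ioo (0:ℝ) 1)
    (hload : δ < lam / (1 - lam)) :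
    MonotoneOn
      (fun y : ℝ => log (1 / y + (lam / (δ * (1 - lam)) - 1) * (1 - y) / y) / log (1 / y))
      (Ioo (0:ℝ) 1) ∧
    Tendsto
      (fun y : ℝ => log (1 / y + (lam / (δ * (1 - lam)) - 1) * (1 - y) / y) / log (1 / y))
      (𝓝[Ioo (0:ℝ) 1] (exp (-δ)))
      (𝓝 ((1 / δ) * log (1 + lam / ((1 - lam) * δ) * (exp δ - 1)))) ∧
    Tendsto
      (fun y : ℝ => log (1 / y + (lam / (δ * (1 - lam)) - 1) * (1 - y) / y) / log (1 / y))
      (𝓝[<] (1:ℝ)) (𝓝 (lam / ((1 - lam) * δ))) := by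
  obtain ⟨hlam0, hlam1⟩ := hlam
  have h1lam : 0 < 1 - lam := by linarith
  set c : ℝ := lam / (δ * (1 - lam)) - 1 with hc_def
  have hc : 0 < c := by
    have : 1 < lam / (δ * (1 - lam)) := by
      rw [lt_div_iff₀ (by positivity)]
      have := (lt_div_iff₀ h1lam).mp hload
      nlinarith
    simp only [hc_def]; linarith
  have hc1 : c + 1 = lam / ((1 - lam) * δ) := by
    rw [hc_def, mul_comm (1 - lam) δ]; ring
  set f : ℝ → ℝ := fun y : ℝ =>
      log (1 / y + c * (1 - y) / y) / log (1 / y) with hf_def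
  set F : ℝ → ℝ := fun y : ℝ => log (1 + c * (1 - y)) / (-log y) + 1 with hF_def
  -- basic facts on Ioo 0 1
  have hEq : ∀ y ∈ Ioo (0:ℝ) 1, f y = F y := by
    intro y hy
    obtain ⟨hy0, hy1⟩ := hy
    have hA : 0 < 1 + c * (1 - y) := by nlinarith
    have hlogy : log y < 0 := Real.log_neg hy0 hy1
    have harg : 1 / y + c * (1 - y) / y = (1 + c * (1 - y)) / y := by
      field_simp
    have hl : log y ≠ 0 := ne_of_lt hlogy
    simp only [hf_def, hF_def, harg]
    rw [Real.log_div hA.ne' hy0.ne', one_div, Real.log_inv]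
    have h2 : log y / (-log y) = -1 := by rw [div_neg, div_self hl]
    rw [sub_div, h2]
    ring
  -- derivative of F at each point of Ioo 0 1
  have hDeriv : ∀ x ∈ Ioo (0:ℝ) 1, HasDerivAt F
      (((-c / (1 + c * (1 - x))) * (-log x) - log (1 + c * (1 - x)) * (-x⁻¹)) / (-log x) ^ 2) x := by
    intro x hx
    obtain ⟨hx0, hx1⟩ := hx
    have hA : 0 < 1 + c * (1 - x) := by nlinarith
    have hlogx : log x < 0 := Real.log_neg hx0 hx1
    have h1 : HasDerivAt (fun y : ℝ => 1 + c * (1 - y)) (-c) x := by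
      have := (((hasDerivAt_id x).const_sub 1).const_mul c).const_add 1
      rw [show -c = c * -1 by ring]; exact this
    have h2 : HasDerivAt (fun y : ℝ => log (1 + c * (1 - y))) (-c / (1 + c * (1 - x))) x :=
      h1.log hA.ne'
    have h3 : HasDerivAt (fun y : ℝ => -log y) (-x⁻¹) x := (Real.hasDerivAt_log hx0.ne').neg
    exact (h2.div h3 (by linarith)).add_const 1
  have hDnonneg : ∀ x ∈ Ioo (0:ℝ) 1,
      0 ≤ ((-c / (1 + c * (1 - x))) * (-log x) - log (1 + c * (1 - x)) * (-x⁻¹)) / (-log x) ^ 2 := by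
    intro x hx
    obtain ⟨hx0, hx1⟩ := hx
    have hA : 0 < 1 + c * (1 - x) := by nlinarith
    have hlogx : log x < 0 := Real.log_neg hx0 hx1
    have k1 := xlog_lb x hx0
    have k2 := xlog_lb (1 + c * (1 - x)) hA
    have hnum : 0 ≤ c * x * log x + (1 + c * (1 - x)) * log (1 + c * (1 - x)) := by
      nlinarith [mul_le_mul_of_nonneg_left k1 hc.le]
    have hrw : (-c / (1 + c * (1 - x))) * (-log x) - log (1 + c * (1 - x)) * (-x⁻¹)
        = (c * x * log x + (1 + c * (1 - x)) * log (1 + c * (1 - x))) / (x * (1 + c * (1 - x))) := by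
      field_simp
      ring
    rw [hrw]
    positivity
  -- Part 1: monotonicity
  have hMono : MonotoneOn f (Ioo (0:ℝ) 1) := by
    have hF : MonotoneOn F (Ioo (0:ℝ) 1) := by
      apply monotoneOn_of_deriv_nonneg (convex_Ioo 0 1)
      · exact fun x hx => ((hDeriv x hx).continuousAt).continuousWithinAt
      · intro x hx
        rw [interior_Ioo] at hx
        exact (hDeriv x hx).differentiableAt.differentiableWithinAt
      · intro x hx
        rw [interior_Ioo] at hx
        rw [(hDeriv x hx).deriv]
        exact hDnonneg x hx
    exact (MonotoneOn.congr hF fun y hy => (hEq y hy).symm)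
  refine ⟨hMono, ?_, ?_⟩
  · -- Part 2
    have hy0 : Real.exp (-δ) ∈ Ioo (0:ℝ) 1 :=
      ⟨Real.exp_pos _, Real.exp_lt_one_iff.mpr (by linarith)⟩
    have hcont : ContinuousAt F (Real.exp (-δ)) := (hDeriv _ hy0).continuousAt
    have hFval : F (Real.exp (-δ)) = (1 / δ) * log (1 + lam / ((1 - lam) * δ) * (exp δ - 1)) := by
      have hB : 0 < 1 + c * (1 - Real.exp (-δ)) := by
        nlinarith [hy0.1, hy0.2]
      have hexp : Real.exp δ * Real.exp (-δ) = 1 := by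
        rw [← Real.exp_add]; simp
      have harg : 1 + lam / ((1 - lam) * δ) * (exp δ - 1)
          = Real.exp δ * (1 + c * (1 - Real.exp (-δ))) := by
        rw [← hc1]; nlinarith [hexp]
      simp only [hF_def, harg, Real.log_mul (Real.exp_pos δ).ne' hB.ne', Real.log_exp]
      field_simp
      ring
    rw [← hFval]
    refine Tendsto.congr' ?_ ((hcont.tendsto).mono_left nhdsWithin_le_nhds)
    filter_upwards [self_mem_nhdsWithin] with y hy using (hEq y hy).symm
  · -- Part 3
    have hc1' : lam / ((1 - lam) * δ) = c + 1 := hc1.symm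
    rw [hc1']
    have hA : Tendsto (fun y : ℝ => 1 + c * (1 - y)) (𝓝[<] (1:ℝ)) (𝓝[≠] 1) := by
      rw [tendsto_nhdsWithin_iff]
      constructor
      · have : Tendsto (fun y : ℝ => 1 + c * (1 - y)) (𝓝 1) (𝓝 (1 + c * (1 - 1))) := by
          exact (continuous_const.add (continuous_const.mul
            (continuous_const.sub continuous_id))).tendsto 1
        simpa using this.mono_left nhdsWithin_le_nhds
      · filter_upwards [eventually_mem_nhdsWithin] with y (hy : y < 1)
        have : 0 < c * (1 - y) := by nlinarith
        simp only [mem_compl_iff, mem_singleton_iff]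
        intro h; nlinarith
    have hnum : Tendsto (fun y : ℝ => Real.log (1 + c * (1 - y)) / (1 + c * (1 - y) - 1))
        (𝓝[<] (1:ℝ)) (𝓝 1) := slope_log.comp hA
    have hden : Tendsto (fun y : ℝ => (y - 1) / Real.log y) (𝓝[<] (1:ℝ)) (𝓝 1) := by
      have h := (slope_log.mono_left
        (nhdsWithin_mono 1 (s := Iio (1:ℝ)) (fun y hy => by exact ne_of_lt hy))).inv₀ one_ne_zero
      simpa [inv_div] using h
    have hprod : Tendsto (fun y : ℝ => Real.log (1 + c * (1 - y)) / (1 + c * (1 - y) - 1)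
        * (c * ((y - 1) / Real.log y)) + 1) (𝓝[<] (1:ℝ)) (𝓝 (c + 1)) := by
      have := (hnum.mul ((tendsto_const_nhds (x := c)).mul hden)).add_const 1
      simpa using this
    refine Tendsto.congr' ?_ hprod
    filter_upwards [Ioo_mem_nhdsLT_of_mem (show (1:ℝ) ∈ Ioc (0:ℝ) 1 by constructor <;> norm_num)]
      with y hy
    obtain ⟨hy0, hy1⟩ := hy
    have hlogy : log y < 0 := Real.log_neg hy0 hy1
    have hA : 0 < 1 + c * (1 - y) := by nlinarith
    rw [hEq y ⟨hy0, hy1⟩]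
    simp only [hF_def]
    have hb : (1:ℝ) - y ≠ 0 := by intro h; nlinarith
    have hl : log y ≠ 0 := ne_of_lt hlogy
    have := aux_alg (log (1 + c * (1 - y))) (1 - y) (log y) c hc.ne' hb hl
    rw [show (1 + c * (1 - y) - 1) = c * (1 - y) by ring, show y - 1 = -(1 - y) by ring]
    exact this.symm
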